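/- Fix a ∈ (0,1) and b ≥ 1, and define f_{a,b}(x) = (1/2)log(1 − a) − (2b/a)x² + x² + x√(1 + x²) + arcsinh(x). Then f_{a,b} has a unique global maximum on ℝ, attained at x_{a,b} = a/(2√(b(b − a))). -/

import Mathlib

open Real

/-- For `a ∈ (0,1)` and `b ≥ 1`, the function
`f(x) = (1/2)log(1-a) - (2b/a)x² + x² + x√(1+x²) + arcsinh(x)` has a unique global
maximum, attained at `x = a/(2√(b(b-a)))`. -/
theorem f_ab_unique_global_max (a b : ℝ) (ha : a ∈ Set.Ioo (0 : ℝ) 1) (hb : 1 ≤ b) :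
    let f : ℝ → ℝ := fun x =>
      (1 / 2) * Real.log (1 - a) - (2 * b / a) * x ^ 2 + x ^ 2
        + x * Real.sqrt (1 + x ^ 2) + Real.arsinh x
    let xab : ℝ := a / (2 * Real.sqrt (b * (b - a)))
    (∀ x, f x ≤ f xab) ∧ (∀ x, f x = f xab → x = xab) := by
  intro f xab
  obtain ⟨ha0, ha1⟩ := ha
  have hba : 0 < b - a := by linarith
  have hb0 : 0 < b := by linarith
  set c : ℝ := 2 * b / a - 1 with hc
  have hc1 : 1 < c := by
    have : 2 < 2 * b / a := by
      rw [lt_div_iff₀ ha0]; nlinarith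
    simp only [hc]; linarith
  have hc0 : 0 < c := by linarith
  -- derivative of f
  have hderiv : ∀ x : ℝ, HasDerivAt f (2 * (Real.sqrt (1 + x ^ 2) - c * x)) x := by
    intro x
    have hx0 : (0:ℝ) < 1 + x ^ 2 := by positivity
    have hs : 0 < Real.sqrt (1 + x ^ 2) := Real.sqrt_pos.2 hx0
    have hs2 : Real.sqrt (1 + x ^ 2) ^ 2 = 1 + x ^ 2 := Real.sq_sqrt hx0.le
    have hinner : HasDerivAt (fun x : ℝ => 1 + x ^ 2) (2 * x) x := by
      simpa using (hasDerivAt_pow 2 x).const_add 1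
    have h1 : HasDerivAt (fun x : ℝ => Real.sqrt (1 + x ^ 2))
        (1 / (2 * Real.sqrt (1 + x ^ 2)) * (2 * x)) x :=
      (Real.hasDerivAt_sqrt hx0.ne').comp x hinner
    have h2 : HasDerivAt (fun x : ℝ => x * Real.sqrt (1 + x ^ 2))
        (1 * Real.sqrt (1 + x ^ 2) + x * (1 / (2 * Real.sqrt (1 + x ^ 2)) * (2 * x))) x :=
      (hasDerivAt_id x).mul h1
    have h3 : HasDerivAt Real.arsinh (Real.sqrt (1 + x ^ 2))⁻¹ x :=
      Real.hasDerivAt_arsinh x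
    have h4 : HasDerivAt (fun x : ℝ => (2 * b / a) * x ^ 2) ((2 * b / a) * (2 * x)) x := by
      simpa using (hasDerivAt_pow 2 x).const_mul (2 * b / a)
    have h5 : HasDerivAt (fun x : ℝ => x ^ 2) (2 * x) x := by
      simpa using hasDerivAt_pow 2 x
    have h6 : HasDerivAt f ((0 - (2 * b / a) * (2 * x) + 2 * x
        + (1 * Real.sqrt (1 + x ^ 2) + x * (1 / (2 * Real.sqrt (1 + x ^ 2)) * (2 * x))))
        + (Real.sqrt (1 + x ^ 2))⁻¹) x :=
      ((((hasDerivAt_const x ((1 / 2) * Real.log (1 - a))).sub h4).add h5).add h2).add h3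
    convert h6 using 1
    have hsne : Real.sqrt (1 + x ^ 2) ≠ 0 := ne_of_gt hs
    rw [hc]
    field_simp
    linear_combination a * hs2
  -- key facts about xab
  have hbb : 0 < b * (b - a) := by positivity
  have hsq : Real.sqrt (b * (b - a)) ^ 2 = b * (b - a) := Real.sq_sqrt hbb.le
  have hsp : 0 < Real.sqrt (b * (b - a)) := Real.sqrt_pos.2 hbb
  have hxab0 : 0 < xab := by positivity
  have hkey : (c ^ 2 - 1) * xab ^ 2 = 1 := by
    have hx2 : xab ^ 2 = a ^ 2 / (4 * (b * (b - a))) := by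
      simp only [xab]
      rw [div_pow, mul_pow, hsq]
      norm_num
    rw [hx2]
    field_simp [hc]
    have hca : c * a = 2 * b - a := by
      rw [hc, sub_mul, div_mul_cancel₀ _ ha0.ne']; ring
    linear_combination (c * a + 2 * b - a) * hca
  -- sign of sqrt(1+x^2) - c x
  have hsign_pos : ∀ x : ℝ, x < xab → 0 < Real.sqrt (1 + x ^ 2) - c * x := by
    intro x hx
    rcases le_or_gt x 0 with h0 | h0
    · have : c * x ≤ 0 := mul_nonpos_of_nonneg_of_nonpos hc0.le h0
      have : 0 < Real.sqrt (1 + x ^ 2) := Real.sqrt_pos.2 (by positivity)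
      linarith
    · have hlt : (c * x) ^ 2 < 1 + x ^ 2 := by
        have hx2 : x ^ 2 < xab ^ 2 := by nlinarith
        nlinarith [hkey]
      have : c * x < Real.sqrt (1 + x ^ 2) := by
        have := Real.sqrt_lt_sqrt (by positivity) hlt
        rwa [Real.sqrt_sq (by positivity : (0:ℝ) ≤ c * x)] at this
      linarith
  have hsign_neg : ∀ x : ℝ, xab < x → Real.sqrt (1 + x ^ 2) - c * x < 0 := by
    intro x hx
    have hx0 : 0 < x := lt_trans hxab0 hx
    have hlt : 1 + x ^ 2 < (c * x) ^ 2 := by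
      have hx2 : xab ^ 2 < x ^ 2 := by nlinarith
      nlinarith [hkey]
    have : Real.sqrt (1 + x ^ 2) < c * x := by
      have := Real.sqrt_lt_sqrt (by positivity) hlt
      rwa [Real.sqrt_sq (by positivity : (0:ℝ) ≤ c * x)] at this
    linarith
  have hcont : Continuous f := by
    exact continuous_iff_continuousAt.2 fun x => (hderiv x).continuousAt
  have hmono : StrictMonoOn f (Set.Iic xab) := by
    apply strictMonoOn_of_deriv_pos (convex_Iic xab) hcont.continuousOn
    intro x hx
    rw [interior_Iic] at hx
    rw [(hderiv x).deriv]
    have := hsign_pos x hx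
    linarith
  have hanti : StrictAntiOn f (Set.Ici xab) := by
    apply strictAntiOn_of_deriv_neg (convex_Ici xab) hcont.continuousOn
    intro x hx
    rw [interior_Ici] at hx
    rw [(hderiv x).deriv]
    have := hsign_neg x hx
    linarith
  have hmax : ∀ x : ℝ, x ≠ xab → f x < f xab := by
    intro x hne
    rcases lt_or_gt_of_ne hne with h | h
    · exact hmono (Set.mem_Iic.2 h.le) (Set.mem_Iic.2 le_rfl) h
    · exact hanti (Set.mem_Ici.2 le_rfl) (Set.mem_Ici.2 h.le) h
  constructor
  · intro x
    rcases eq_or_ne x xab with rfl | hne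
    · exact le_rfl
    · exact (hmax x hne).le
  · intro x hxeq
    by_contra hne
    exact absurd hxeq (ne_of_lt (hmax x hne))
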